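/- For the convex-concave game f(x,y) = α(x²−y²), g = −f, with α, η > 0, consensus optimization (ConOpt) with parameter γ > 0 gives updates x_{k+1} = (1 − 2ηα − 4ηγα²)x_k, y_{k+1} = (1 − 2ηα − 4ηγα²)y_k, while for the concave-convex game f(x,y) = α(−x²+y²) it gives x_{k+1} = (1 + 2ηα − 4ηγα²)x_k, y_{k+1} = (1 + 2ηα − 4ηγα²)y_k. Consequently, if 4γα² > 2α (i.e. γα > 1/2) and η is small enough, ConOpt converges to the spurious critical point (0,0) of the concave-convex game, which is not a Nash equilibrium. -/

import Mathlib

open Filter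

lemma geom_tendsto (c : ℝ) (hc : |c| < 1) (x : ℕ → ℝ)
    (hx : ∀ k, x (k + 1) = c * x k) :
    Tendsto x atTop (nhds 0) := by
  have hform : ∀ k, x k = c ^ k * x 0 := by
    intro k
    induction k with
    | zero => simp
    | succ n ih => rw [hx n, ih, pow_succ]; ring
  have h := (tendsto_pow_atTop_nhds_zero_of_abs_lt_one hc).mul_const (x 0)
  simp only [zero_mul] at h
  exact h.congr fun k => (hform k).symm

/-- ConOpt updates on the convex-concave game `f = α(x²-y²)` and the
concave-convex game `f = α(-x²+y²)` (with `g = -f`), and convergence of ConOpt to the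
spurious critical point `(0,0)` of the concave-convex game when `γα > 1/2` and `η` is
small enough; `(0,0)` is not a Nash equilibrium of that game. -/
theorem stmt_11 (α γ : ℝ) (hα : 0 < α) (hγ : 0 < γ) :
    (∀ η x : ℝ, x - η * (2 * α * x + γ * (2 * α) * (2 * α * x)) =
        (1 - 2 * η * α - 4 * η * γ * α ^ 2) * x) ∧
    (∀ η x : ℝ, x - η * (-(2 * α * x) + γ * (-(2 * α)) * (-(2 * α * x))) =
        (1 + 2 * η * α - 4 * η * γ * α ^ 2) * x) ∧
    (1 / 2 < γ * α →
      ∃ η₀ > 0, ∀ η : ℝ, 0 < η → η < η₀ →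
        ∀ x y : ℕ → ℝ,
          (∀ k, x (k + 1) = (1 + 2 * η * α - 4 * η * γ * α ^ 2) * x k) →
          (∀ k, y (k + 1) = (1 + 2 * η * α - 4 * η * γ * α ^ 2) * y k) →
          Tendsto (fun k => (x k, y k)) atTop (nhds (0, 0))) ∧
    (∀ x : ℝ, x ≠ 0 → α * (-x ^ 2 + (0 : ℝ) ^ 2) < α * (-(0 : ℝ) ^ 2 + (0 : ℝ) ^ 2)) := by
  refine ⟨fun η x => by ring, fun η x => by ring, ?_, ?_⟩
  · intro hhalf
    have hd : 0 < 4 * γ * α ^ 2 - 2 * α := by nlinarith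
    refine ⟨1 / (4 * γ * α ^ 2 - 2 * α), by positivity, ?_⟩
    intro η hη hη' x y hx hy
    set c := 1 + 2 * η * α - 4 * η * γ * α ^ 2 with hc
    have hcabs : |c| < 1 := by
      rw [abs_lt]
      constructor
      · have : η * (4 * γ * α ^ 2 - 2 * α) < 1 := by
          calc η * (4 * γ * α ^ 2 - 2 * α)
              < (1 / (4 * γ * α ^ 2 - 2 * α)) * (4 * γ * α ^ 2 - 2 * α) := by
                exact mul_lt_mul_of_pos_right hη' hd
            _ = 1 := by exact one_div_mul_cancel hd.ne'
        nlinarith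
      · nlinarith
    have hX := geom_tendsto c hcabs x hx
    have hY := geom_tendsto c hcabs y hy
    exact hX.prodMk_nhds hY
  · intro x hx
    have : 0 < x ^ 2 := by positivity
    nlinarith
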